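/- Cycle-with-chord reducibility: Let k = 3 and let G be a graph containing a cycle C all of whose vertices have degree 3 in G, such that C has a chord and at least one vertex of C has a neighbor outside V(C). Then for every cover of G with lists of size 3, any DP-3-coloring of G − V(C) extends to a DP-3-coloring of G. -/
import Mathlib


/-- A DP-cover (matching assignment) of a graph `G` with all lists of size `k`:
a graph `H` on `V × Fin k` where each list `{v} × Fin k` is a clique, edges between
distinct lists only join lists of adjacent vertices of `G`, and between two lists the
edges form a (partial) matching. -/
structure DPCover {V : Type*} (G : SimpleGraph V) (k : ℕ) where
  H : SimpleGraph (V × Fin k)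
  list_clique : ∀ (v : V) (i j : Fin k), i ≠ j → H.Adj (v, i) (v, j)
  cross_adj : ∀ (u v : V) (i j : Fin k), u ≠ v → H.Adj (u, i) (v, j) → G.Adj u v
  matching₁ : ∀ (u v : V) (i j j' : Fin k), u ≠ v →
    H.Adj (u, i) (v, j) → H.Adj (u, i) (v, j') → j = j'

/-- An `M_L`-coloring: a transversal `f` choosing one color per vertex whose image is an
independent set in the cover graph. -/
def DPCover.IsColoring {V : Type*} {G : SimpleGraph V} {k : ℕ}
    (C : DPCover G k) (f : V → Fin k) : Prop :=
  ∀ u v : V, u ≠ v → ¬ C.H.Adj (u, f u) (v, f v)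

/-- `G` is DP-`k`-colorable if every cover with lists of size `k` admits a coloring. -/
def DPColorable {V : Type*} (G : SimpleGraph V) (k : ℕ) : Prop :=
  ∀ C : DPCover G k, ∃ f : V → Fin k, C.IsColoring f

section helpers

lemma fin3_avoid (P Q : Fin 3 → Prop)
    (hP : ∀ c c', P c → P c' → c = c') (hQ : ∀ c c', Q c → Q c' → c = c') :
    ∃ c, ¬ P c ∧ ¬ Q c := by
  by_cases p0 : P 0
  · by_cases q1 : Q 1
    · by_cases q2 : Q 2
      · exact absurd (hQ _ _ q1 q2) (by decide)
      · exact ⟨2, fun p2 => absurd (hP _ _ p0 p2) (by decide), q2⟩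
    · exact ⟨1, fun p1 => absurd (hP _ _ p0 p1) (by decide), q1⟩
  · by_cases q0 : Q 0
    · by_cases p1 : P 1
      · exact ⟨2, fun p2 => absurd (hP _ _ p1 p2) (by decide),
          fun q2 => absurd (hQ _ _ q0 q2) (by decide)⟩
      · exact ⟨1, p1, fun q1 => absurd (hQ _ _ q0 q1) (by decide)⟩
    · exact ⟨0, p0, q0⟩

lemma fin3_two (P : Fin 3 → Prop) (hP : ∀ c c', P c → P c' → c = c') :
    ∃ c c', c ≠ c' ∧ ¬ P c ∧ ¬ P c' := by
  by_cases p0 : P 0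
  · exact ⟨1, 2, by decide, fun p1 => absurd (hP _ _ p0 p1) (by decide),
      fun p2 => absurd (hP _ _ p0 p2) (by decide)⟩
  · by_cases p1 : P 1
    · exact ⟨0, 2, by decide, p0, fun p2 => absurd (hP _ _ p1 p2) (by decide)⟩
    · exact ⟨0, 1, by decide, p0, p1⟩

lemma fin3_common (x0 y0 x1 y1 : Fin 3) (Q0 Q1 : Fin 3 → Prop)
    (hx0 : Q0 x0) (hy0 : Q0 y0) (hx1 : Q1 x1) (hy1 : Q1 y1)
    (h0 : x0 ≠ y0) (h1 : x1 ≠ y1) : ∃ d, Q0 d ∧ Q1 d := by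
  by_cases e1 : x0 = x1; · exact ⟨x0, hx0, e1 ▸ hx1⟩
  by_cases e2 : x0 = y1; · exact ⟨x0, hx0, e2 ▸ hy1⟩
  by_cases e3 : y0 = x1; · exact ⟨y0, hy0, e3 ▸ hx1⟩
  by_cases e4 : y0 = y1; · exact ⟨y0, hy0, e4 ▸ hy1⟩
  exfalso
  have l0 := x0.isLt; have l1 := y0.isLt; have l2 := x1.isLt; have l3 := y1.isLt
  have d0 : x0.val ≠ y0.val := fun h => h0 (Fin.val_injective h)
  have d1 : x1.val ≠ y1.val := fun h => h1 (Fin.val_injective h)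
  have d2 : x0.val ≠ x1.val := fun h => e1 (Fin.val_injective h)
  have d3 : x0.val ≠ y1.val := fun h => e2 (Fin.val_injective h)
  have d4 : y0.val ≠ x1.val := fun h => e3 (Fin.val_injective h)
  have d5 : y0.val ≠ y1.val := fun h => e4 (Fin.val_injective h)
  omega

lemma fin3_trick (P0 P1 : Fin 3 → Prop) (μ0 μ1 : Fin 3 → Fin 3 → Prop)
    (hP0 : ∀ c c', P0 c → P0 c' → c = c') (hP1 : ∀ c c', P1 c → P1 c' → c = c')
    (hμ0L : ∀ c d d', μ0 c d → μ0 c d' → d = d') (hμ0R : ∀ c c' d, μ0 c d → μ0 c' d → c = c')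
    (hμ1L : ∀ c d d', μ1 c d → μ1 c d' → d = d') (hμ1R : ∀ c c' d, μ1 c d → μ1 c' d → c = c') :
    ∃ c0 c1, ¬ P0 c0 ∧ ¬ P1 c1 ∧ ∀ d d', μ0 c0 d → μ1 c1 d' → d = d' := by
  obtain ⟨a0, b0, hab0, ha0, hb0⟩ := fin3_two P0 hP0
  obtain ⟨a1, b1, hab1, ha1, hb1⟩ := fin3_two P1 hP1
  by_cases h0a : ∀ d, ¬ μ0 a0 d
  · exact ⟨a0, a1, ha0, ha1, fun d d' h _ => absurd h (h0a d)⟩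
  by_cases h0b : ∀ d, ¬ μ0 b0 d
  · exact ⟨b0, a1, hb0, ha1, fun d d' h _ => absurd h (h0b d)⟩
  by_cases h1a : ∀ d, ¬ μ1 a1 d
  · exact ⟨a0, a1, ha0, ha1, fun d d' _ h => absurd h (h1a d')⟩
  by_cases h1b : ∀ d, ¬ μ1 b1 d
  · exact ⟨a0, b1, ha0, hb1, fun d d' _ h => absurd h (h1b d')⟩
  push_neg at h0a h0b h1a h1b
  obtain ⟨da, hda⟩ := h0a; obtain ⟨db, hdb⟩ := h0b
  obtain ⟨ea, hea⟩ := h1a; obtain ⟨eb, heb⟩ := h1b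
  have hd : da ≠ db := fun h => hab0 (hμ0R _ _ _ hda (h ▸ hdb))
  have he : ea ≠ eb := fun h => hab1 (hμ1R _ _ _ hea (h ▸ heb))
  obtain ⟨d, hd0, hd1⟩ := fin3_common da db ea eb (fun d => μ0 a0 d ∨ μ0 b0 d)
    (fun d => μ1 a1 d ∨ μ1 b1 d) (Or.inl hda) (Or.inr hdb) (Or.inl hea) (Or.inr heb) hd he
  rcases hd0 with h|h <;> rcases hd1 with h'|h'
  · exact ⟨a0, a1, ha0, ha1, fun x y hx hy => (hμ0L _ _ _ hx h).trans (hμ1L _ _ _ hy h').symm⟩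
  · exact ⟨a0, b1, ha0, hb1, fun x y hx hy => (hμ0L _ _ _ hx h).trans (hμ1L _ _ _ hy h').symm⟩
  · exact ⟨b0, a1, hb0, ha1, fun x y hx hy => (hμ0L _ _ _ hx h).trans (hμ1L _ _ _ hy h').symm⟩
  · exact ⟨b0, b1, hb0, hb1, fun x y hx hy => (hμ0L _ _ _ hx h).trans (hμ1L _ _ _ hy h').symm⟩

def rkf (n B t : ℕ) : ℕ :=
  if t = 0 then n - 1 else if t = 1 then 0 else if t = n - 1 then 1
  else if t = B then n - 2 else if t < B then t else B + (n-2) - t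

variable {n B : ℕ}

lemma rkf_lt (hn : 4 ≤ n) (hB2 : 2 ≤ B) (hBn : B ≤ n - 2) : ∀ t, t < n → rkf n B t < n := by
  intro t ht; unfold rkf; split_ifs <;> omega

lemma rkf_inj (hn : 4 ≤ n) (hB2 : 2 ≤ B) (hBn : B ≤ n - 2) : ∀ s t, s < n → t < n → rkf n B s = rkf n B t → s = t := by
  intro s t hs ht h; unfold rkf at h; split_ifs at h <;> omega

lemma rkf_zero (hn : 4 ≤ n) (hB2 : 2 ≤ B) (hBn : B ≤ n - 2) : rkf n B 0 = n - 1 := by unfold rkf; rw [if_pos rfl]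

lemma rkf_one (hn : 4 ≤ n) (hB2 : 2 ≤ B) (hBn : B ≤ n - 2) : rkf n B 1 = 0 := by unfold rkf; rw [if_neg (by omega), if_pos rfl]

lemma rkf_last (hn : 4 ≤ n) (hB2 : 2 ≤ B) (hBn : B ≤ n - 2) : rkf n B (n-1) = 1 := by unfold rkf; rw [if_neg (by omega), if_neg (by omega), if_pos rfl]

lemma rkf_B (hn : 4 ≤ n) (hB2 : 2 ≤ B) (hBn : B ≤ n - 2) : rkf n B B = n - 2 := by unfold rkf; rw [if_neg (by omega), if_neg (by omega), if_neg (by omega), if_pos rfl]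

lemma rkf_succ (hn : 4 ≤ n) (hB2 : 2 ≤ B) (hBn : B ≤ n - 2) : ∀ t, 2 ≤ t → t < B → rkf n B t < rkf n B (t+1) := by
  intro t h1 h2; unfold rkf; split_ifs <;> omega

lemma rkf_pred (hn : 4 ≤ n) (hB2 : 2 ≤ B) (hBn : B ≤ n - 2) : ∀ t, B < t → t ≤ n - 2 → rkf n B t < rkf n B (t-1) := by
  intro t h1 h2; unfold rkf; split_ifs <;> omega

end helpers

section
variable {V : Type} {G : SimpleGraph V}

lemma greedy_ext (D : DPCover G 3) (f₀ : V → Fin 3) (T : Set V) (r : V → ℕ) (m : ℕ)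
    (x y v : V) (hxT : x ∈ T) (hyT : y ∈ T) (hvT : v ∈ T)
    (hrx : r x = 0) (hry : r y = 1) (hrv : r v = m - 1) (hm : 3 ≤ m)
    (hrlt : ∀ t ∈ T, r t < m)
    (hrinj : ∀ t ∈ T, ∀ t' ∈ T, r t = r t' → t = t')
    (hout : ∀ u u', u ≠ u' → u ∉ T → u' ∉ T → ¬ D.H.Adj (u, f₀ u) (u', f₀ u'))
    (hxy : ¬ G.Adj x y)
    (hOx : ∃ p, ∀ u, u ∉ T → G.Adj x u → u = p)
    (hOy : ∃ p, ∀ u, u ∉ T → G.Adj y u → u = p)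
    (hmid : ∀ t ∈ T, 2 ≤ r t → r t < m - 1 →
      ∃ p q, ∀ u, G.Adj t u → (u ∉ T ∨ (u ∈ T ∧ r u < r t)) → u = p ∨ u = q)
    (hlast : ∃ p, ∀ u, G.Adj v u → u = x ∨ u = y ∨ u = p) :
    ∃ f : V → Fin 3, (∀ u, u ∉ T → f u = f₀ u) ∧
      (∀ u u' : V, u ≠ u' → ¬ D.H.Adj (u, f u) (u', f u')) := by
  classical
  have hxyne : x ≠ y := fun h => by rw [h, hry] at hrx; exact absurd hrx (by omega)
  have hxvne : x ≠ v := fun h => by rw [h, hrv] at hrx; omega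
  have hyvne : y ≠ v := fun h => by rw [h, hrv] at hry; omega
  -- invariant-building induction
  have key : ∀ k : ℕ, 2 ≤ k → ∃ f : V → Fin 3,
      (∀ u, u ∉ T → f u = f₀ u) ∧
      (∀ d d' : Fin 3, D.H.Adj (x, f x) (v, d) → D.H.Adj (y, f y) (v, d') → d = d') ∧
      (∀ t, t ∈ T → ∀ t', t' ∈ T → r t < k → r t' < k → t ≠ t' →
        ¬ D.H.Adj (t, f t) (t', f t')) ∧
      (∀ t, t ∈ T → r t < k → ∀ u, u ∉ T → ¬ D.H.Adj (t, f t) (u, f u)) := by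
    intro k hk
    induction k with
    | zero => omega
    | succ k ih =>
      rcases Nat.lt_or_ge k 2 with hk2 | hk2
      · -- base case: k+1 = 2
        have hkeq : k + 1 = 2 := by omega
        obtain ⟨px, hpx⟩ := hOx
        obtain ⟨py, hpy⟩ := hOy
        -- trick choice
        obtain ⟨cx, cy, hcx, hcy, htk⟩ := fin3_trick
          (fun c => ∃ u, u ∉ T ∧ G.Adj x u ∧ D.H.Adj (x, c) (u, f₀ u))
          (fun c => ∃ u, u ∉ T ∧ G.Adj y u ∧ D.H.Adj (y, c) (u, f₀ u))
          (fun c d => D.H.Adj (x, c) (v, d)) (fun c d => D.H.Adj (y, c) (v, d))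
          (by rintro c c' ⟨u, huT, hadj, hH⟩ ⟨u', huT', hadj', hH'⟩
              have hux : u ≠ x := fun h => huT (h ▸ hxT)
              have : u = u' := (hpx u huT hadj).trans (hpx u' huT' hadj').symm
              subst this
              exact D.matching₁ u x (f₀ u) c c' hux hH.symm hH'.symm)
          (by rintro c c' ⟨u, huT, hadj, hH⟩ ⟨u', huT', hadj', hH'⟩
              have huy : u ≠ y := fun h => huT (h ▸ hyT)
              have : u = u' := (hpy u huT hadj).trans (hpy u' huT' hadj').symm
              subst this
              exact D.matching₁ u y (f₀ u) c c' huy hH.symm hH'.symm)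
          (fun c d d' h h' => D.matching₁ x v c d d' hxvne h h')
          (fun c c' d h h' => D.matching₁ v x d c c' (Ne.symm hxvne) h.symm h'.symm)
          (fun c d d' h h' => D.matching₁ y v c d d' hyvne h h')
          (fun c c' d h h' => D.matching₁ v y d c c' (Ne.symm hyvne) h.symm h'.symm)
        refine ⟨Function.update (Function.update f₀ x cx) y cy, ?_, ?_, ?_, ?_⟩
        · intro u huT
          rw [Function.update_of_ne (fun h => huT (by rw [h]; exact hyT)),
            Function.update_of_ne (fun h => huT (by rw [h]; exact hxT))]
        · intro d d' hd hd'
          rw [Function.update_of_ne hxyne, Function.update_self] at hd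
          rw [Function.update_self] at hd'
          exact htk d d' hd hd'
        · intro t htT t' htT' hrt hrt' hne
          have ht : t = x ∨ t = y := by
            rcases Nat.lt_or_ge (r t) 1 with h | h
            · left; exact hrinj t htT x hxT (by omega)
            · right; exact hrinj t htT y hyT (by omega)
          have ht' : t' = x ∨ t' = y := by
            rcases Nat.lt_or_ge (r t') 1 with h | h
            · left; exact hrinj t' htT' x hxT (by omega)
            · right; exact hrinj t' htT' y hyT (by omega)
          have hnoGH : ∀ i j, ¬ D.H.Adj (x, i) (y, j) := fun i j hH =>
            hxy (D.cross_adj x y i j hxyne hH)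
          rcases ht with rfl | rfl <;> rcases ht' with rfl | rfl
          · exact absurd rfl hne
          · intro hH; exact hnoGH _ _ hH
          · intro hH; exact hnoGH _ _ hH.symm
          · exact absurd rfl hne
        · intro t htT hrt u huT
          have fu : (Function.update (Function.update f₀ x cx) y cy) u = f₀ u := by
            rw [Function.update_of_ne (fun h => huT (by rw [h]; exact hyT)),
              Function.update_of_ne (fun h => huT (by rw [h]; exact hxT))]
          have ht : t = x ∨ t = y := by
            rcases Nat.lt_or_ge (r t) 1 with h | h
            · left; exact hrinj t htT x hxT (by omega)
            · right; exact hrinj t htT y hyT (by omega)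
          rcases ht with h | h
          · rw [h, fu, Function.update_of_ne hxyne, Function.update_self]
            intro hH
            by_cases hadj : G.Adj x u
            · exact hcx ⟨u, huT, hadj, hH⟩
            · exact hadj (D.cross_adj x u cx (f₀ u) (fun h => huT (by rw [← h]; exact hxT)) hH)
          · rw [h, fu, Function.update_self]
            intro hH
            by_cases hadj : G.Adj y u
            · exact hcy ⟨u, huT, hadj, hH⟩
            · exact hadj (D.cross_adj y u cy (f₀ u) (fun h => huT (by rw [← h]; exact hyT)) hH)
      · -- inductive step, k ≥ 2
        obtain ⟨f, hA, hTK, hPc, hPo⟩ := ih hk2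
        by_cases hex : ∃ t ∈ T, r t = k
        · obtain ⟨t₀, ht₀T, hrt₀⟩ := hex
          have ht₀x : t₀ ≠ x := fun h => by rw [h, hrx] at hrt₀; omega
          have ht₀y : t₀ ≠ y := fun h => by rw [h, hry] at hrt₀; omega
          by_cases hv : t₀ = v
          · -- final vertex
            rw [hv] at hrt₀
            obtain ⟨p, hp⟩ := hlast
            obtain ⟨c, hcR, hcP⟩ := fin3_avoid
              (fun c => D.H.Adj (v, c) (x, f x) ∨ D.H.Adj (v, c) (y, f y))
              (fun c => p ≠ v ∧ D.H.Adj (v, c) (p, f p))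
              (by rintro c c' (h | h) (h' | h')
                  · exact D.matching₁ x v (f x) c c' hxvne h.symm h'.symm
                  · exact hTK c c' h.symm h'.symm
                  · exact (hTK c' c h'.symm h.symm).symm
                  · exact D.matching₁ y v (f y) c c' hyvne h.symm h'.symm)
              (by rintro c c' ⟨hpv, h⟩ ⟨-, h'⟩
                  exact D.matching₁ p v (f p) c c' hpv h.symm h'.symm)
            refine ⟨Function.update f v c, ?_, ?_, ?_, ?_⟩
            · intro u huT
              rw [Function.update_of_ne (fun h => huT (by rw [h]; exact hvT))]
              exact hA u huT
            · intro d d' hd hd'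
              rw [Function.update_of_ne hxvne] at hd
              rw [Function.update_of_ne hyvne] at hd'
              exact hTK d d' hd hd'
            · -- pair properness
              have hnew : ∀ t', t' ∈ T → r t' < k → t' ≠ v →
                  ¬ D.H.Adj (v, c) (t', f t') := by
                intro t' ht'T hrt' ht'v hH
                have hGadj : G.Adj v t' := D.cross_adj v t' c (f t') (Ne.symm ht'v) hH
                rcases hp t' hGadj with rfl | rfl | rfl
                · exact hcR (Or.inl hH)
                · exact hcR (Or.inr hH)
                · exact hcP ⟨ht'v, hH⟩
              intro t htT t' ht'T hrt hrt' hne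
              by_cases h1 : t = v <;> by_cases h2 : t' = v
              · exact absurd (h1.trans h2.symm) hne
              · subst h1
                have hrt'k : r t' < k := by
                  rcases Nat.lt_or_ge (r t') k with h | h; · exact h
                  · exact absurd (hrinj t' ht'T t hvT (by omega)) h2
                rw [Function.update_self, Function.update_of_ne h2]
                exact hnew t' ht'T hrt'k h2
              · subst h2
                have hrtk : r t < k := by
                  rcases Nat.lt_or_ge (r t) k with h | h; · exact h
                  · exact absurd (hrinj t htT t' hvT (by omega)) h1
                rw [Function.update_self, Function.update_of_ne h1]
                intro hH
                exact hnew t htT hrtk h1 hH.symm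
              · have hrtk : r t < k := by
                  rcases Nat.lt_or_ge (r t) k with h | h; · exact h
                  · exact absurd (hrinj t htT v hvT (by omega)) h1
                have hrt'k : r t' < k := by
                  rcases Nat.lt_or_ge (r t') k with h | h; · exact h
                  · exact absurd (hrinj t' ht'T v hvT (by omega)) h2
                rw [Function.update_of_ne h1, Function.update_of_ne h2]
                exact hPc t htT t' ht'T hrtk hrt'k hne
            · intro t htT hrt u huT
              have fu : Function.update f v c u = f u :=
                Function.update_of_ne (fun h => huT (by rw [h]; exact hvT)) _ _
              by_cases h1 : t = v
              · subst h1
                rw [Function.update_self, fu]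
                intro hH
                have hvu : t ≠ u := fun h => huT (by rw [← h]; exact hvT)
                have hGadj : G.Adj t u := D.cross_adj t u c (f u) hvu hH
                rcases hp u hGadj with rfl | rfl | rfl
                · exact huT hxT
                · exact huT hyT
                · exact hcP ⟨hvu.symm, hH⟩
              · have hrtk : r t < k := by
                  rcases Nat.lt_or_ge (r t) k with h | h; · exact h
                  · exact absurd (hrinj t htT v hvT (by omega)) h1
                rw [Function.update_of_ne h1, fu]
                exact hPo t htT hrtk u huT
          · -- middle vertex
            have hrk1 : k < m - 1 := by
              have h1 := hrlt t₀ ht₀T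
              rcases Nat.lt_or_ge k (m-1) with h | h; · exact h
              · exact absurd (hrinj t₀ ht₀T v hvT (by omega)) hv
            obtain ⟨p, q, hpq⟩ := hmid t₀ ht₀T (by omega) (by omega)
            obtain ⟨c, hcP, hcQ⟩ := fin3_avoid
              (fun c => p ≠ t₀ ∧ D.H.Adj (t₀, c) (p, f p))
              (fun c => q ≠ t₀ ∧ D.H.Adj (t₀, c) (q, f q))
              (by rintro c c' ⟨hpt, h⟩ ⟨-, h'⟩
                  exact D.matching₁ p t₀ (f p) c c' hpt h.symm h'.symm)
              (by rintro c c' ⟨hqt, h⟩ ⟨-, h'⟩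
                  exact D.matching₁ q t₀ (f q) c c' hqt h.symm h'.symm)
            have hnew : ∀ u, u ≠ t₀ → (u ∉ T ∨ (u ∈ T ∧ r u < k)) →
                ¬ D.H.Adj (t₀, c) (u, f u) := by
              intro u hut hcond hH
              have hGadj : G.Adj t₀ u := D.cross_adj t₀ u c (f u) (Ne.symm hut) hH
              have hcond' : u ∉ T ∨ (u ∈ T ∧ r u < r t₀) := by
                rcases hcond with h | ⟨h1, h2⟩
                · exact Or.inl h
                · exact Or.inr ⟨h1, by omega⟩
              rcases hpq u hGadj hcond' with rfl | rfl
              · exact hcP ⟨hut, hH⟩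
              · exact hcQ ⟨hut, hH⟩
            refine ⟨Function.update f t₀ c, ?_, ?_, ?_, ?_⟩
            · intro u huT
              rw [Function.update_of_ne (fun h => huT (by rw [h]; exact ht₀T))]
              exact hA u huT
            · intro d d' hd hd'
              rw [Function.update_of_ne ht₀x.symm] at hd
              rw [Function.update_of_ne ht₀y.symm] at hd'
              exact hTK d d' hd hd'
            · intro t htT t' ht'T hrt hrt' hne
              by_cases h1 : t = t₀ <;> by_cases h2 : t' = t₀
              · exact absurd (h1.trans h2.symm) hne
              · subst h1
                have hrt'k : r t' < k := by
                  rcases Nat.lt_or_ge (r t') k with h | h; · exact h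
                  · exact absurd (hrinj t' ht'T t ht₀T (by omega)) h2
                rw [Function.update_self, Function.update_of_ne h2]
                exact hnew t' h2 (Or.inr ⟨ht'T, hrt'k⟩)
              · subst h2
                have hrtk : r t < k := by
                  rcases Nat.lt_or_ge (r t) k with h | h; · exact h
                  · exact absurd (hrinj t htT t' ht₀T (by omega)) h1
                rw [Function.update_self, Function.update_of_ne h1]
                intro hH
                exact hnew t h1 (Or.inr ⟨htT, hrtk⟩) hH.symm
              · have hrtk : r t < k := by
                  rcases Nat.lt_or_ge (r t) k with h | h; · exact h
                  · exact absurd (hrinj t htT t₀ ht₀T (by omega)) h1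
                have hrt'k : r t' < k := by
                  rcases Nat.lt_or_ge (r t') k with h | h; · exact h
                  · exact absurd (hrinj t' ht'T t₀ ht₀T (by omega)) h2
                rw [Function.update_of_ne h1, Function.update_of_ne h2]
                exact hPc t htT t' ht'T hrtk hrt'k hne
            · intro t htT hrt u huT
              have fu : Function.update f t₀ c u = f u :=
                Function.update_of_ne (fun h => huT (by rw [h]; exact ht₀T)) _ _
              by_cases h1 : t = t₀
              · subst h1
                rw [Function.update_self, fu]
                exact hnew u (fun h => huT (by rw [h]; exact ht₀T)) (Or.inl huT)
              · have hrtk : r t < k := by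
                  rcases Nat.lt_or_ge (r t) k with h | h; · exact h
                  · exact absurd (hrinj t htT t₀ ht₀T (by omega)) h1
                rw [Function.update_of_ne h1, fu]
                exact hPo t htT hrtk u huT
        · -- no vertex of rank k
          refine ⟨f, hA, hTK, ?_, ?_⟩
          · intro t htT t' ht'T hrt hrt' hne
            have h1 : r t < k := by
              rcases Nat.lt_or_ge (r t) k with h | h; · exact h
              · exact absurd ⟨t, htT, by omega⟩ hex
            have h2 : r t' < k := by
              rcases Nat.lt_or_ge (r t') k with h | h; · exact h
              · exact absurd ⟨t', ht'T, by omega⟩ hex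
            exact hPc t htT t' ht'T h1 h2 hne
          · intro t htT hrt u huT
            have h1 : r t < k := by
              rcases Nat.lt_or_ge (r t) k with h | h; · exact h
              · exact absurd ⟨t, htT, by omega⟩ hex
            exact hPo t htT h1 u huT
  -- conclude
  obtain ⟨f, hA, -, hPc, hPo⟩ := key m (by omega)
  refine ⟨f, hA, ?_⟩
  intro u u' hne
  by_cases h1 : u ∈ T <;> by_cases h2 : u' ∈ T
  · exact hPc u h1 u' h2 (hrlt u h1) (hrlt u' h2) hne
  · exact hPo u h1 (hrlt u h1) u' h2
  · intro hH; exact hPo u' h2 (hrlt u' h2) u h1 hH.symm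
  · rw [hA u h1, hA u' h2]; exact hout u u' hne h1 h2

end

/-- Cycle-with-chord reducibility (k = 3). Let `G` contain a cycle `C` (given by an
injective cyclic map `w : ZMod n → V`, `n ≥ 3`, with consecutive vertices adjacent)
all of whose vertices have degree 3 in `G`, such that `C` has a chord and at least one
vertex of `C` has a neighbor outside `C`. Then for every cover of `G` with lists of
size 3, any DP-3-coloring of `G − V(C)` extends to a DP-3-coloring of `G`. -/
theorem cycle_with_chord_reducible {V : Type} [Fintype V] (G : SimpleGraph V)
    (n : ℕ) (hn : 3 ≤ n) (w : ZMod n → V) (hinj : Function.Injective w)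
    (hcyc : ∀ i : ZMod n, G.Adj (w i) (w (i + 1)))
    (hdeg : ∀ i : ZMod n, (G.neighborSet (w i)).ncard = 3)
    (hchord : ∃ i j : ZMod n, G.Adj (w i) (w j) ∧ j ≠ i + 1 ∧ i ≠ j + 1)
    (hext : ∃ (i : ZMod n) (u : V), u ∉ Set.range w ∧ G.Adj (w i) u) :
    ∀ (C : DPCover G 3) (f₀ : V → Fin 3),
      (∀ u u' : V, u ≠ u' → u ∉ Set.range w → u' ∉ Set.range w →
        ¬ C.H.Adj (u, f₀ u) (u', f₀ u')) →
      ∃ f : V → Fin 3, (∀ u : V, u ∉ Set.range w → f u = f₀ u) ∧ C.IsColoring f := by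
  intro D f₀ hout
  classical
  have hn4 : 4 ≤ n := by
    rcases Nat.lt_or_ge n 4 with h | h
    · exfalso
      have hn3 : n = 3 := by omega
      subst hn3
      obtain ⟨i, j, hadj, hj1, hj2⟩ := hchord
      have hij : i ≠ j := fun h => hadj.ne (congrArg w h)
      have hdec : ∀ i j : ZMod 3, i ≠ j → j ≠ i + 1 → i ≠ j + 1 → False := by decide
      exact hdec i j hij hj1 hj2
    · exact h
  haveI : NeZero n := ⟨by omega⟩
  haveI : Fact (1 < n) := ⟨by omega⟩
  have hdvd : ∀ k : ℕ, 1 ≤ k → k ≤ 4 → ((k : ℕ) : ZMod n) = 0 → n ≤ k := by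
    intro k h1 h3 h0
    rw [ZMod.natCast_eq_zero_iff] at h0
    exact Nat.le_of_dvd (by omega) h0
  have h1z : (1 : ZMod n) ≠ 0 := by
    intro h
    have := hdvd 1 le_rfl (by omega) (by push_cast; exact h)
    omega
  have h2z : (2 : ZMod n) ≠ 0 := by
    intro h
    have := hdvd 2 (by omega) (by omega) (by push_cast; exact h)
    omega
  have h3z : (3 : ZMod n) ≠ 0 := by
    intro h
    have := hdvd 3 (by omega) (by omega) (by push_cast; exact h)
    omega
  have hAdjPrev : ∀ i : ZMod n, G.Adj (w i) (w (i - 1)) := by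
    intro i
    have h := hcyc (i - 1)
    rw [sub_add_cancel] at h
    exact h.symm
  -- third-neighbor representative
  have nbrs : ∀ i : ZMod n, ∃ q, ∀ u, G.Adj (w i) u →
      u = w (i-1) ∨ u = w (i+1) ∨ u = q := by
    intro i
    have hpm : w (i - 1) ≠ w (i + 1) := by
      intro h
      have : i - 1 = i + 1 := hinj h
      exact h2z (by linear_combination -this)
    by_cases hE : ∃ u, G.Adj (w i) u ∧ u ≠ w (i-1) ∧ u ≠ w (i+1)
    · obtain ⟨q, hq, hq1, hq2⟩ := hE
      refine ⟨q, fun u hu => ?_⟩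
      by_cases e1 : u = w (i-1); · exact Or.inl e1
      by_cases e2 : u = w (i+1); · exact Or.inr (Or.inl e2)
      right; right
      by_contra hne
      have hsub : ({w (i-1), w (i+1), u, q} : Set V) ⊆ G.neighborSet (w i) := by
        intro z hz
        rcases hz with rfl | rfl | rfl | rfl
        · exact hAdjPrev i
        · exact hcyc i
        · exact hu
        · exact hq
      have hcard : ({w (i-1), w (i+1), u, q} : Set V).ncard = 4 := by
        rw [Set.ncard_insert_of_notMem (by
            simp only [Set.mem_insert_iff, Set.mem_singleton_iff]
            push_neg
            exact ⟨hpm, Ne.symm e1, Ne.symm hq1⟩) (Set.toFinite _),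
          Set.ncard_insert_of_notMem (by
            simp only [Set.mem_insert_iff, Set.mem_singleton_iff]
            push_neg
            exact ⟨Ne.symm e2, Ne.symm hq2⟩) (Set.toFinite _),
          Set.ncard_insert_of_notMem (by
            simp only [Set.mem_singleton_iff]
            exact hne) (Set.toFinite _),
          Set.ncard_singleton]
      have hle := Set.ncard_le_ncard hsub (Set.toFinite _)
      rw [hcard, hdeg i] at hle
      omega
    · push_neg at hE
      refine ⟨w i, fun u hu => ?_⟩
      by_cases e1 : u = w (i-1); · exact Or.inl e1
      exact Or.inr (Or.inl (hE u hu e1))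
  -- select a good chord
  obtain ⟨a, b, hab, hb1, hb2, hA⟩ : ∃ a b : ZMod n, G.Adj (w a) (w b) ∧
      b ≠ a + 1 ∧ a ≠ b + 1 ∧ ¬ G.Adj (w (a+1)) (w (a-1)) := by
    obtain ⟨a, b, hab, hb1, hb2⟩ := hchord
    by_cases hc1 : ¬ G.Adj (w (a+1)) (w (a-1))
    · exact ⟨a, b, hab, hb1, hb2, hc1⟩
    push_neg at hc1
    by_cases hc2 : ¬ G.Adj (w (a+1+1)) (w a)
    · refine ⟨a+1, a-1, hc1, ?_, ?_, ?_⟩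
      · intro h; exact h3z (by linear_combination -h)
      · intro h; exact h1z (by linear_combination h)
      · have e : a + 1 - 1 = a := by ring
        rw [e]; exact hc2
    push_neg at hc2
    -- b = a + 2
    obtain ⟨q, hq⟩ := nbrs a
    have hqb : q = w b := by
      rcases hq (w b) hab with h | h | h
      · exact absurd (by rw [hinj h]; ring : a = b + 1) hb2
      · exact absurd (hinj h) hb1
      · exact h.symm
    have hba2 : b = a + 2 := by
      have e : a + 2 = a + 1 + 1 := by ring
      rcases hq (w (a+1+1)) hc2.symm with h | h | h
      · exfalso; exact h3z (by linear_combination (hinj h))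
      · exfalso; exact h1z (by linear_combination (hinj h))
      · rw [hqb] at h; rw [e]; exact (hinj h).symm
    by_cases hc3 : ¬ G.Adj (w a) (w (a-2))
    · refine ⟨a-1, a+1, hc1.symm, ?_, ?_, ?_⟩
      · intro h; exact h1z (by linear_combination h)
      · intro h; exact h3z (by linear_combination -h)
      · have e1 : a - 1 + 1 = a := by ring
        have e2 : a - 1 - 1 = a - 2 := by ring
        rw [e1, e2]; exact hc3
    push_neg at hc3
    have hn44 : n = 4 := by
      rcases hq (w (a-2)) hc3 with h | h | h
      · exfalso; exact h1z (by linear_combination -(hinj h))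
      · exfalso; exact h3z (by linear_combination -(hinj h))
      · rw [hqb] at h
        have h4 : ((4 : ℕ) : ZMod n) = 0 := by
          have := hinj h
          rw [hba2] at this
          push_cast
          linear_combination -this
        have := hdvd 4 (by omega) (by omega) h4
        omega
    exfalso
    subst hn44
    obtain ⟨i0, u0, hu0, hadj0⟩ := hext
    obtain ⟨qi, hqi⟩ := nbrs i0
    have hu0q : u0 = qi := by
      rcases hqi u0 hadj0 with h | h | h
      · exact absurd ⟨i0 - 1, h.symm⟩ hu0
      · exact absurd ⟨i0 + 1, h.symm⟩ hu0
      · exact h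
    have hadj2 : G.Adj (w i0) (w (i0 + 2)) := by
      have hd4 : ∀ d : ZMod 4, d = 0 ∨ d = 1 ∨ d = 2 ∨ d = 3 := by decide
      have ea : a + 1 + 1 = a + 2 := by ring
      rcases hd4 (i0 - a) with h | h | h | h
      · have hi : i0 = a := by linear_combination h
        subst hi
        rw [← ea]; exact hc2.symm
      · have hi : i0 = a + 1 := by linear_combination h
        subst hi
        have e : a + 1 + 2 = a - 1 := by
          have : (3 : ZMod 4) = -1 := by decide
          linear_combination this
        rw [e]; exact hc1
      · have hi : i0 = a + 2 := by linear_combination h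
        subst hi
        have e : a + 2 + 2 = a := by
          have : (4 : ZMod 4) = 0 := by decide
          linear_combination this
        rw [e, ← ea]; exact hc2
      · have hi : i0 = a - 1 := by
          have : (3 : ZMod 4) = -1 := by decide
          linear_combination h + this
        subst hi
        have e : a - 1 + 2 = a + 1 := by ring
        rw [e]; exact hc1.symm
    have : w (i0 + 2) = qi := by
      rcases hqi (w (i0+2)) hadj2 with h | h | h
      · exfalso; exact h3z (by linear_combination (hinj h))
      · exfalso; exact h1z (by linear_combination (hinj h))
      · exact h
    exact hu0 ⟨i0 + 2, by rw [this, ← hu0q]⟩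
  -- numeric setup
  have hba : b ≠ a := fun h => hab.ne (congrArg w h.symm)
  set B : ℕ := (b - a).val with hBdef
  have hcastB : ((B : ℕ) : ZMod n) = b - a := ZMod.natCast_rightInverse (b - a)
  have hB2 : 2 ≤ B := by
    have hB0 : B ≠ 0 := by
      intro h0
      apply hba
      have : b - a = 0 := by rw [← hcastB, h0]; simp
      linear_combination this
    have hB1 : B ≠ 1 := by
      intro h1
      apply hb1
      have : b - a = 1 := by rw [← hcastB, h1]; push_cast; ring
      linear_combination this
    omega
  have hBlt : B < n := ZMod.val_lt _
  have hvneg1 : ((-1 : ZMod n)).val = n - 1 := by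
    have e : (-1 : ZMod n) = ((n-1 : ℕ) : ZMod n) := by
      rw [Nat.cast_sub (by omega : 1 ≤ n), ZMod.natCast_self]
      push_cast; ring
    rw [e, ZMod.val_cast_of_lt (by omega)]
  have hBn2 : B ≤ n - 2 := by
    have hBn1 : B ≠ n - 1 := by
      intro h
      apply hb2
      have : b - a = -1 := by
        rw [← hcastB, h, Nat.cast_sub (by omega : 1 ≤ n), ZMod.natCast_self]
        push_cast; ring
      linear_combination -this
    omega
  -- val bridges
  have hv0 : (a - a).val = 0 := by rw [sub_self, ZMod.val_zero]
  have hvx : ((a+1) - a).val = 1 := by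
    have e : a + 1 - a = 1 := by ring
    rw [e, ZMod.val_one]
  have hvy : ((a-1) - a).val = n - 1 := by
    have e : a - 1 - a = -1 := by ring
    rw [e, hvneg1]
  have hvalsucc : ∀ i : ZMod n, (i - a).val ≤ n - 2 → ((i+1) - a).val = (i - a).val + 1 := by
    intro i h
    have e : i + 1 - a = (i - a) + 1 := by ring
    rw [e, ZMod.val_add, ZMod.val_one, Nat.mod_eq_of_lt (by omega)]
  have hvalpred : ∀ i : ZMod n, 1 ≤ (i - a).val → ((i-1) - a).val = (i - a).val - 1 := by
    intro i h
    have e : i - 1 - a = (i - a) + (-1) := by ring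
    have hlt := ZMod.val_lt (i - a)
    rw [e, ZMod.val_add, hvneg1]
    have e2 : (i - a).val + (n - 1) = ((i - a).val - 1) + n := by omega
    rw [e2, Nat.add_mod_right, Nat.mod_eq_of_lt (by omega)]
  have hvalinj : ∀ i j : ZMod n, (i - a).val = (j - a).val → i = j := by
    intro i j h
    have h1 := ZMod.natCast_rightInverse (i - a)
    have h2 := ZMod.natCast_rightInverse (j - a)
    rw [h] at h1
    have : i - a = j - a := by rw [← h1, h2]
    linear_combination this
  -- rank function
  set r : V → ℕ := fun u => rkf n B ((Function.invFun w u - a).val) with hrdef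
  have hrw : ∀ i : ZMod n, r (w i) = rkf n B ((i - a).val) := by
    intro i
    simp only [hrdef]
    rw [Function.leftInverse_invFun hinj i]
  -- chord partner representatives
  have hqa : ∀ u, G.Adj (w a) u → u = w (a-1) ∨ u = w (a+1) ∨ u = w b := by
    obtain ⟨q, hq⟩ := nbrs a
    have hqb : q = w b := by
      rcases hq (w b) hab with h | h | h
      · exact absurd (by rw [hinj h]; ring : a = b + 1) hb2
      · exact absurd (hinj h) hb1
      · exact h.symm
    intro u hu
    rcases hq u hu with h | h | h
    · exact Or.inl h
    · exact Or.inr (Or.inl h)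
    · exact Or.inr (Or.inr (h.trans hqb))
  have hqbb : ∀ u, G.Adj (w b) u → u = w (b-1) ∨ u = w (b+1) ∨ u = w a := by
    obtain ⟨q, hq⟩ := nbrs b
    have hqa' : q = w a := by
      rcases hq (w a) hab.symm with h | h | h
      · exact absurd (by rw [hinj h]; ring : b = a + 1) hb1
      · exact absurd (by rw [hinj h] : a = b + 1) hb2
      · exact h.symm
    intro u hu
    rcases hq u hu with h | h | h
    · exact Or.inl h
    · exact Or.inr (Or.inl h)
    · exact Or.inr (Or.inr (h.trans hqa'))
  -- apply the greedy lemma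
  obtain ⟨f, hf1, hf2⟩ := greedy_ext D f₀ (Set.range w) r n
    (w (a+1)) (w (a-1)) (w a) ⟨a+1, rfl⟩ ⟨a-1, rfl⟩ ⟨a, rfl⟩
    (by rw [hrw, hvx, rkf_one hn4 hB2 hBn2])
    (by rw [hrw, hvy, rkf_last hn4 hB2 hBn2])
    (by rw [hrw, hv0, rkf_zero hn4 hB2 hBn2])
    hn
    (by rintro t ⟨i, rfl⟩
        rw [hrw]
        exact rkf_lt hn4 hB2 hBn2 _ (ZMod.val_lt _))
    (by rintro t ⟨i, rfl⟩ t' ⟨j, rfl⟩ h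
        rw [hrw, hrw] at h
        rw [hvalinj i j (rkf_inj hn4 hB2 hBn2 _ _ (ZMod.val_lt _) (ZMod.val_lt _) h)])
    hout
    hA
    (by obtain ⟨q, hq⟩ := nbrs (a+1)
        refine ⟨q, fun u huT hu => ?_⟩
        rcases hq u hu with h | h | h
        · exact absurd ⟨a+1-1, h.symm⟩ huT
        · exact absurd ⟨a+1+1, h.symm⟩ huT
        · exact h)
    (by obtain ⟨q, hq⟩ := nbrs (a-1)
        refine ⟨q, fun u huT hu => ?_⟩
        rcases hq u hu with h | h | h
        · exact absurd ⟨a-1-1, h.symm⟩ huT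
        · exact absurd ⟨a-1+1, h.symm⟩ huT
        · exact h)
    (by rintro t ⟨i, rfl⟩ h2 hlt
        rw [hrw] at h2 hlt
        have hδlt : (i - a).val < n := ZMod.val_lt _
        have hδ0 : (i - a).val ≠ 0 := by
          intro h; rw [h, rkf_zero hn4 hB2 hBn2] at hlt; omega
        have hδ1 : (i - a).val ≠ 1 := by
          intro h; rw [h, rkf_one hn4 hB2 hBn2] at h2; omega
        have hδn1 : (i - a).val ≠ n - 1 := by
          intro h; rw [h, rkf_last hn4 hB2 hBn2] at h2; omega
        by_cases hδB : (i - a).val = B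
        · -- i = b
          have hib : i = b := hvalinj i b hδB
          refine ⟨w (b - 1), w (b + 1), ?_⟩
          intro u hu hcond
          rw [hib] at hu
          rcases hqbb u hu with h | h | h
          · exact Or.inl h
          · exact Or.inr h
          · exfalso
            rcases hcond with hout' | ⟨-, hlt'⟩
            · exact hout' ⟨a, h.symm⟩
            · rw [h, hrw, hv0, rkf_zero hn4 hB2 hBn2, hrw, hδB,
                rkf_B hn4 hB2 hBn2] at hlt'
              omega
        · obtain ⟨q, hq⟩ := nbrs i
          rcases Nat.lt_or_ge (i - a).val B with hlt2 | hgt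
          · refine ⟨w (i - 1), q, ?_⟩
            intro u hu hcond
            rcases hq u hu with h | h | h
            · exact Or.inl h
            · exfalso
              have hlater : rkf n B ((i - a).val) < rkf n B ((i - a).val + 1) :=
                rkf_succ hn4 hB2 hBn2 _ (by omega) hlt2
              rcases hcond with hout' | ⟨-, hlt'⟩
              · exact hout' ⟨i+1, h.symm⟩
              · rw [h, hrw, hvalsucc i (by omega)] at hlt'
                rw [hrw] at hlt'
                omega
            · exact Or.inr h
          · refine ⟨w (i + 1), q, ?_⟩
            intro u hu hcond
            rcases hq u hu with h | h | h
            · exfalso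
              have hlater : rkf n B ((i - a).val) < rkf n B ((i - a).val - 1) :=
                rkf_pred hn4 hB2 hBn2 _ (by omega) (by omega)
              rcases hcond with hout' | ⟨-, hlt'⟩
              · exact hout' ⟨i-1, h.symm⟩
              · rw [h, hrw, hvalpred i (by omega)] at hlt'
                rw [hrw] at hlt'
                omega
            · exact Or.inl h
            · exact Or.inr h)
    (by refine ⟨w b, fun u hu => ?_⟩
        rcases hqa u hu with h | h | h
        · exact Or.inr (Or.inl h)
        · exact Or.inl h
        · exact Or.inr (Or.inr h))
  exact ⟨f, hf1, hf2⟩
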